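/- Let σ > 0, let x, δ ∈ ℝ^d with δ ≠ 0, and let β ∈ ℝ. Let S = {z ∈ ℝ^d : ⟨δ, z⟩ ≤ β}, and let h : ℝ^d → [0,1] be any measurable function (representing the acceptance probability of a possibly randomized binary decision rule). If ∫ h dν_{x,σ} ≥ ν_{x,σ}(S), then ∫ h dν_{x+δ,σ} ≥ ν_{x+δ,σ}(S). -/

import Mathlib

open MeasureTheory ProbabilityTheory

/-- Standard normal CDF. -/
noncomputable def Phi (t : ℝ) : ℝ := ((gaussianReal 0 1) (Set.Iic t)).toReal

/-- Inverse of the standard normal CDF on `(0,1)`. -/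
noncomputable def PhiInv : ℝ → ℝ := Function.invFun Phi

/-- Gaussian measure on `ℝ^d` with mean `m` and covariance `σ² I`
(product of `d` one-dimensional Gaussians). -/
noncomputable def gaussianVec {d : ℕ} (m : EuclideanSpace ℝ (Fin d)) (σ : ℝ) :
    Measure (EuclideanSpace ℝ (Fin d)) :=
  (Measure.pi fun i => gaussianReal (m i) ((σ ^ 2).toNNReal)).map
    (MeasurableEquiv.toLp 2 (Fin d → ℝ))

open Real Set
open scoped NNReal ENNReal

lemma gaussian_shift (m a : ℝ) {v : ℝ≥0} (hv : v ≠ 0) :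
    gaussianReal (m + a) v = (gaussianReal m v).withDensity
      (fun t => ENNReal.ofReal (Real.exp ((a * (t - m) - a ^ 2 / 2) / v))) := by
  rw [gaussianReal_of_var_ne_zero _ hv, gaussianReal_of_var_ne_zero _ hv,
    ← withDensity_mul _ (measurable_gaussianPDF _ _)
      (by exact (Real.measurable_exp.comp (by measurability)).ennreal_ofReal)]
  congr 1
  ext t
  simp only [Pi.mul_apply, gaussianPDF, ← ENNReal.ofReal_mul (gaussianPDFReal_nonneg m v t)]
  congr 1
  simp only [gaussianPDFReal, mul_assoc, ← Real.exp_add]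
  congr 2
  have hv' : (v : ℝ) ≠ 0 := by exact_mod_cast hv
  field_simp
  ring

lemma lintegral_pi_prod : ∀ (n : ℕ) (μ : Fin n → Measure ℝ), (∀ i, SigmaFinite (μ i)) →
    ∀ (g : Fin n → ℝ → ℝ≥0∞), (∀ i, Measurable (g i)) →
    ∫⁻ z, ∏ i, g i (z i) ∂Measure.pi μ = ∏ i, ∫⁻ t, g i t ∂μ i := by
  intro n
  induction n with
  | zero => intro μ _ g _; simp
  | succ n ih =>
    intro μ hμ g hg
    have := fun i => hμ i
    have hmp := measurePreserving_piFinSuccAbove μ 0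
    set e := MeasurableEquiv.piFinSuccAbove (fun _ : Fin (n+1) => ℝ) 0 with he
    set f : ℝ × (Fin n → ℝ) → ℝ≥0∞ :=
      fun p => g 0 p.1 * ∏ j : Fin n, g ((0:Fin (n+1)).succAbove j) (p.2 j) with hf
    have hfm : Measurable f := ((hg 0).comp measurable_fst).mul
      (Finset.measurable_prod _ fun j _ => (hg _).comp ((measurable_pi_apply j).comp measurable_snd))
    have key : ∀ z : Fin (n+1) → ℝ, ∏ i, g i (z i) = f (e z) := by
      intro z
      rw [Fin.prod_univ_succAbove (fun i => g i (z i)) 0]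
      rfl
    have step2 := MeasureTheory.lintegral_prod_mul (μ := μ 0)
      (ν := Measure.pi fun j => μ ((0:Fin (n+1)).succAbove j)) (f := g 0)
      (g := fun w => ∏ j : Fin n, g ((0:Fin (n+1)).succAbove j) (w j))
      (hg 0).aemeasurable (Measurable.aemeasurable (by
        exact Finset.measurable_prod _ fun j _ => (hg _).comp (measurable_pi_apply j)))
    simp_rw [key]
    rw [hmp.lintegral_comp hfm]
    have : ∫⁻ p, f p ∂((μ 0).prod (Measure.pi fun j => μ ((0:Fin (n+1)).succAbove j)))
        = (∫⁻ t, g 0 t ∂μ 0) * ∫⁻ w, ∏ j : Fin n, g ((0:Fin (n+1)).succAbove j) (w j)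
            ∂Measure.pi (fun j => μ ((0:Fin (n+1)).succAbove j)) := step2
    rw [this, ih _ (fun j => hμ _) _ (fun j => hg _),
      Fin.prod_univ_succAbove (fun i => ∫⁻ t, g i t ∂μ i) 0]

lemma pi_withDensity {n : ℕ} (μ ν : Fin n → Measure ℝ)
    [∀ i, IsProbabilityMeasure (μ i)] [∀ i, IsProbabilityMeasure (ν i)]
    (f : Fin n → ℝ → ℝ≥0∞) (hf : ∀ i, Measurable (f i))
    (hν : ∀ i, ν i = (μ i).withDensity (f i)) :
    Measure.pi ν = (Measure.pi μ).withDensity (fun z => ∏ i, f i (z i)) := by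
  refine Measure.pi_eq fun s hs => ?_
  rw [withDensity_apply _ (MeasurableSet.univ_pi hs)]
  have hind : ∀ z : Fin n → ℝ, (univ.pi s).indicator (fun z => ∏ i, f i (z i)) z
      = ∏ i, (s i).indicator (f i) (z i) := by
    intro z
    by_cases hz : z ∈ univ.pi s
    · rw [indicator_of_mem hz]
      exact Finset.prod_congr rfl fun i _ =>
        (indicator_of_mem (hz i (mem_univ i)) (f i)).symm
    · rw [indicator_of_notMem hz]
      rw [mem_univ_pi, not_forall] at hz
      obtain ⟨i, hi⟩ := hz
      exact (Finset.prod_eq_zero (Finset.mem_univ i)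
        (by rw [indicator_of_notMem hi])).symm
  rw [← lintegral_indicator (MeasurableSet.univ_pi hs)]
  simp_rw [hind]
  rw [lintegral_pi_prod n μ (fun i => inferInstance) _
    (fun i => (hf i).indicator (hs i))]
  refine Finset.prod_congr rfl fun i _ => ?_
  rw [hν i, withDensity_apply _ (hs i), ← lintegral_indicator (hs i)]

lemma map_withDensity_equiv {α β : Type*} [MeasurableSpace α] [MeasurableSpace β]
    (e : α ≃ᵐ β) (μ : Measure α) (F : α → ℝ≥0∞) (hF : Measurable F) :
    Measure.map e (μ.withDensity F) = (Measure.map e μ).withDensity (F ∘ e.symm) := by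
  ext s hs
  rw [MeasurableEquiv.map_apply, withDensity_apply _ (e.measurable hs),
    withDensity_apply _ hs,
    setLIntegral_map hs (hF.comp e.symm.measurable) e.measurable]
  refine lintegral_congr fun z => ?_
  simp

set_option maxHeartbeats 2000000 in
/-- **Neyman–Pearson lemma, part (1) (Lemma 4(1) of Cohen et al.).**
If a randomized rule `h` accepts under `ν_{x,σ}` at least as often as the half-space
`S = {z : ⟨δ, z⟩ ≤ β}`, then it also does so under `ν_{x+δ,σ}`. -/
theorem neyman_pearson_le {d : ℕ} (σ : ℝ) (hσ : 0 < σ)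
    (x δ : EuclideanSpace ℝ (Fin d)) (hδ : δ ≠ 0) (β : ℝ)
    (S : Set (EuclideanSpace ℝ (Fin d)))
    (hS : S = {z | (inner ℝ δ z : ℝ) ≤ β})
    (h : EuclideanSpace ℝ (Fin d) → ℝ) (hmeas : Measurable h)
    (h01 : ∀ z, h z ∈ Set.Icc (0 : ℝ) 1)
    (hX : ((gaussianVec x σ) S).toReal ≤ ∫ z, h z ∂(gaussianVec x σ)) :
    ((gaussianVec (x + δ) σ) S).toReal ≤ ∫ z, h z ∂(gaussianVec (x + δ) σ) := by
  classical
  have hσ2 : (0:ℝ) < σ ^ 2 := by positivity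
  set v : ℝ≥0 := (σ ^ 2).toNNReal with hv_def
  have hv : v ≠ 0 := by
    simp only [hv_def, ne_eq, Real.toNNReal_eq_zero, not_le]
    exact hσ2
  have hvr : (v : ℝ) = σ ^ 2 := Real.coe_toNNReal _ hσ2.le
  -- the likelihood ratio
  set r : EuclideanSpace ℝ (Fin d) → ℝ := fun z =>
    Real.exp (((inner ℝ δ z : ℝ) - (inner ℝ δ x : ℝ) - ‖δ‖ ^ 2 / 2) / σ ^ 2) with hr_def
  have hinner_cont : Continuous fun z : EuclideanSpace ℝ (Fin d) => (inner ℝ δ z : ℝ) :=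
    continuous_const.inner continuous_id
  have hr_meas : Measurable r := by
    apply Real.measurable_exp.comp
    exact ((hinner_cont.measurable.sub measurable_const).sub measurable_const).div_const _
  have hr_pos : ∀ z, 0 < r z := fun z => Real.exp_pos _
  -- density identity
  have hF_meas : Measurable (fun w : Fin d → ℝ =>
      ∏ i, ENNReal.ofReal (Real.exp ((δ i * (w i - x i) - δ i ^ 2 / 2) / v))) := by
    apply Finset.measurable_prod
    intro i _
    exact (Real.measurable_exp.comp (by measurability)).ennreal_ofReal
  have hpi : Measure.pi (fun i => gaussianReal ((x + δ) i) v)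
      = (Measure.pi fun i => gaussianReal (x i) v).withDensity
        (fun w => ∏ i, ENNReal.ofReal (Real.exp ((δ i * (w i - x i) - δ i ^ 2 / 2) / v))) := by
    refine pi_withDensity (fun i => gaussianReal (x i) v)
      (fun i => gaussianReal ((x + δ) i) v)
      (fun i t => ENNReal.ofReal (Real.exp ((δ i * (t - x i) - δ i ^ 2 / 2) / v)))
      (fun i => (Real.measurable_exp.comp (by measurability)).ennreal_ofReal) fun i => ?_
    have hxi : (x + δ) i = x i + δ i := rfl
    show gaussianReal ((x + δ) i) v = (gaussianReal (x i) v).withDensity _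
    rw [hxi, gaussian_shift _ _ hv]
  set e := (MeasurableEquiv.toLp 2 (Fin d → ℝ)).symm with he_def
  have hFe : ∀ z : EuclideanSpace ℝ (Fin d),
      (∏ i, ENNReal.ofReal (Real.exp ((δ i * ((e z) i - x i) - δ i ^ 2 / 2) / v)))
        = ENNReal.ofReal (r z) := by
    intro z
    have h4 : ∀ i, (e z) i = z i := fun i => rfl
    simp_rw [h4]
    rw [← ENNReal.ofReal_prod_of_nonneg (fun i _ => (Real.exp_pos _).le), ← Real.exp_sum]
    have h1 : (inner ℝ δ z : ℝ) = ∑ i, δ i * z i := by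
      rw [PiLp.inner_apply]; simp [mul_comm]
    have h2 : (inner ℝ δ x : ℝ) = ∑ i, δ i * x i := by
      rw [PiLp.inner_apply]; simp [mul_comm]
    have h3 : ‖δ‖ ^ 2 = ∑ i, δ i ^ 2 := by
      rw [← real_inner_self_eq_norm_sq, PiLp.inner_apply]
      refine Finset.sum_congr rfl fun i _ => ?_
      simp [sq]
    have harg : (∑ i, (δ i * (z i - x i) - δ i ^ 2 / 2) / (v:ℝ))
        = ((inner ℝ δ z : ℝ) - (inner ℝ δ x : ℝ) - ‖δ‖ ^ 2 / 2) / σ ^ 2 := by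
      rw [h1, h2, h3, ← Finset.sum_div, hvr]
      congr 1
      rw [Finset.sum_sub_distrib]
      simp_rw [mul_sub]
      rw [Finset.sum_sub_distrib, ← Finset.sum_div]
    rw [harg, hr_def]
  have hmain : gaussianVec (x + δ) σ
      = (gaussianVec x σ).withDensity (fun z => ENNReal.ofReal (r z)) := by
    rw [gaussianVec, gaussianVec, ← hv_def, hpi, map_withDensity_equiv _ _ _ hF_meas]
    congr 1
    ext z
    rw [Function.comp_apply]
    exact hFe z
  -- probability instances
  have hprob : ∀ m : EuclideanSpace ℝ (Fin d), IsProbabilityMeasure (gaussianVec m σ) := by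
    intro m
    rw [gaussianVec]
    exact Measure.isProbabilityMeasure_map
      (MeasurableEquiv.toLp 2 (Fin d → ℝ)).measurable.aemeasurable
  have hνp := hprob x
  have hν'p := hprob (x + δ)
  set ν := gaussianVec x σ with hν_def
  have hS_meas : MeasurableSet S := by
    rw [hS]
    exact measurableSet_le hinner_cont.measurable measurable_const
  -- integrability of the likelihood ratio
  have hlint : ∫⁻ z, ENNReal.ofReal (r z) ∂ν = 1 := by
    have huniv : (gaussianVec (x + δ) σ) Set.univ = 1 := measure_univ
    rw [hmain, withDensity_apply _ MeasurableSet.univ, setLIntegral_univ] at huniv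
    exact huniv
  have hr_int : Integrable r ν := by
    have := integrable_toReal_of_lintegral_ne_top
      hr_meas.ennreal_ofReal.aemeasurable (by rw [hlint]; exact ENNReal.one_ne_top)
    refine this.congr (Filter.Eventually.of_forall fun z => ?_)
    exact ENNReal.toReal_ofReal (hr_pos z).le
  -- the threshold
  set c : ℝ := Real.exp ((β - (inner ℝ δ x : ℝ) - ‖δ‖ ^ 2 / 2) / σ ^ 2) with hc_def
  have hc_pos : 0 < c := Real.exp_pos _
  have hrc : ∀ z, z ∈ S ↔ r z ≤ c := by
    intro z
    rw [hS]
    simp only [Set.mem_setOf_eq, hr_def, hc_def]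
    rw [Real.exp_le_exp, div_le_div_iff_of_pos_right hσ2, sub_le_sub_iff_right,
      sub_le_sub_iff_right]
  -- integrability facts
  have hh_int : Integrable h ν := by
    refine Integrable.mono' (integrable_const 1) hmeas.aestronglyMeasurable ?_
    refine Filter.Eventually.of_forall fun z => ?_
    rw [Real.norm_eq_abs, abs_of_nonneg (h01 z).1]
    exact (h01 z).2
  have hrh_int : Integrable (fun z => r z * h z) ν := by
    refine Integrable.mono' hr_int (hr_meas.mul hmeas).aestronglyMeasurable ?_
    refine Filter.Eventually.of_forall fun z => ?_
    rw [Real.norm_eq_abs, abs_mul, abs_of_pos (hr_pos z), abs_of_nonneg (h01 z).1]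
    exact mul_le_of_le_one_right (hr_pos z).le (h01 z).2
  have hind_r_int : Integrable (S.indicator r) ν := hr_int.indicator hS_meas
  have hind1_int : Integrable (S.indicator fun _ => (1:ℝ)) ν :=
    (integrable_const 1).indicator hS_meas
  -- rewrite the data and the goal
  have hD : (ν S).toReal = ∫ z, S.indicator (fun _ => (1:ℝ)) z ∂ν := by
    rw [integral_indicator hS_meas]
    simp [measureReal_def]
  have hgoalL : ((gaussianVec (x + δ) σ) S).toReal = ∫ z, S.indicator r z ∂ν := by
    rw [hmain, withDensity_apply _ hS_meas,
      ← ofReal_integral_eq_lintegral_ofReal hr_int.integrableOn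
        (Filter.Eventually.of_forall fun z => (hr_pos z).le),
      ENNReal.toReal_ofReal (setIntegral_nonneg hS_meas fun z _ => (hr_pos z).le),
      ← integral_indicator hS_meas]
  have hint' : ∫ z, h z ∂(gaussianVec (x + δ) σ) = ∫ z, r z * h z ∂ν := by
    rw [hmain]
    have hco : (fun z => ENNReal.ofReal (r z))
        = fun z => (((fun z => (r z).toNNReal) z : ℝ≥0) : ℝ≥0∞) := rfl
    rw [hco, integral_withDensity_eq_integral_smul hr_meas.real_toNNReal h]
    refine integral_congr_ae (Filter.Eventually.of_forall fun z => ?_)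
    simp [NNReal.smul_def, Real.coe_toNNReal _ (hr_pos z).le]
  -- key pointwise inequality and conclusion
  have mono : (∫ z, c * (h z - S.indicator (fun _ => (1:ℝ)) z) ∂ν)
      ≤ ∫ z, r z * h z - S.indicator r z ∂ν := by
    refine integral_mono ((hh_int.sub hind1_int).const_mul c)
      (hrh_int.sub hind_r_int) fun z => ?_
    by_cases hz : z ∈ S
    · rw [Set.indicator_of_mem hz, Set.indicator_of_mem hz]
      nlinarith [(hrc z).1 hz, (h01 z).2, hc_pos, hr_pos z]
    · rw [Set.indicator_of_notMem hz, Set.indicator_of_notMem hz]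
      have hcr : c ≤ r z := (lt_of_not_ge fun hle => hz ((hrc z).2 hle)).le
      nlinarith [(h01 z).1, hc_pos]
  have e1 : (∫ z, c * (h z - S.indicator (fun _ => (1:ℝ)) z) ∂ν)
      = c * ((∫ z, h z ∂ν) - ∫ z, S.indicator (fun _ => (1:ℝ)) z ∂ν) := by
    rw [← integral_sub hh_int hind1_int, ← integral_const_mul]
  have e2 : (∫ z, r z * h z - S.indicator r z ∂ν)
      = (∫ z, r z * h z ∂ν) - ∫ z, S.indicator r z ∂ν :=
    integral_sub hrh_int hind_r_int
  rw [e1, e2] at mono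
  rw [hD] at hX
  rw [hgoalL, hint']
  nlinarith [mul_nonneg hc_pos.le (sub_nonneg.2 hX)]
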